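/- With the distance-algorithm invariant that c + s_c ∈ span(measurements) for all c ∈ C, every element u ∈ span(C) ∩ span(V) yields an unmasked stabilizer: writing s_u for the stabilizer associated with u, both u (as an element of span(V)) and u + s_u have outcomes determined by measurement outcomes, hence the outcome O(s_u) = O(u)·O(u·s_u) of the original stabilizer s_u ∈ ⟨S_0⟩ is determined by the measurement record. -/

import Mathlib

abbrev PauliVec (n : ℕ) := (Fin n → ZMod 2) × (Fin n → ZMod 2)

def sympl {n : ℕ} (v w : PauliVec n) : ZMod 2 :=
  ∑ i, (v.1 i * w.2 i + v.2 i * w.1 i)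

/-- The state of the distance algorithm: `C` is the list of evolved stabilizer
generators, each paired with its associated original stabilizer; `V` is the list
of accumulated (updated) measurement operators; `meas` records all measurement
operators performed so far. -/
structure AlgState (n : ℕ) where
  C : List (PauliVec n × PauliVec n)
  V : List (PauliVec n)
  meas : List (PauliVec n)

/-- Initial state of the distance algorithm: `C = S₀` (each generator associated
with itself), `V` empty, no measurements yet. -/
def initState {n : ℕ} (S₀ : List (PauliVec n)) : AlgState n :=
  ⟨S₀.map fun s => (s, s), [], []⟩

/-- One step of the distance algorithm, processing the measurement `m` according
to cases 1–4 (depending on which elements of `C` and `V` anticommute with `m`). -/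
inductive Step {n : ℕ} : AlgState n → PauliVec n → AlgState n → Prop
  | case1 (σ : AlgState n) (m : PauliVec n)
      (hC : ∀ cs ∈ σ.C, sympl cs.1 m = 0) (hV : ∀ v ∈ σ.V, sympl v m = 0) :
      Step σ m ⟨σ.C, σ.V ++ [m], σ.meas ++ [m]⟩
  | case2 (σ : AlgState n) (m : PauliVec n) (cj : PauliVec n × PauliVec n)
      (hcj : cj ∈ σ.C) (hanti : sympl cj.1 m = 1)
      (hV : ∀ v ∈ σ.V, sympl v m = 0) :
      Step σ m ⟨(σ.C.erase cj).map fun cs =>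
          if sympl cs.1 m = 1 then (cs.1 + cj.1, cs.2 + cj.2) else cs,
        σ.V ++ [m], σ.meas ++ [m]⟩
  | case3 (σ : AlgState n) (m : PauliVec n) (mj : PauliVec n)
      (hmj : mj ∈ σ.V) (hanti : sympl mj m = 1)
      (hC : ∀ cs ∈ σ.C, sympl cs.1 m = 0) :
      Step σ m ⟨σ.C,
        ((σ.V.erase mj).map fun v => if sympl v m = 1 then v + mj else v) ++ [m],
        σ.meas ++ [m]⟩
  | case4 (σ : AlgState n) (m : PauliVec n) (mj : PauliVec n)
      (hmj : mj ∈ σ.V) (hanti : sympl mj m = 1)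
      (cj : PauliVec n × PauliVec n) (hcj : cj ∈ σ.C) (hcanti : sympl cj.1 m = 1) :
      Step σ m ⟨σ.C.map fun cs =>
          if sympl cs.1 m = 1 then (cs.1 + mj, cs.2) else cs,
        ((σ.V.erase mj).map fun v => if sympl v m = 1 then v + mj else v) ++ [m],
        σ.meas ++ [m]⟩

/-- Running the distance algorithm on a list of measurements. -/
inductive RunList {n : ℕ} : AlgState n → List (PauliVec n) → AlgState n → Prop
  | nil (σ : AlgState n) : RunList σ [] σ
  | cons {σ σ' σ'' : AlgState n} {m : PauliVec n} {ms : List (PauliVec n)} :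
      Step σ m σ' → RunList σ' ms σ'' → RunList σ (m :: ms) σ''

open Submodule in
/-- The `F₂`-span of a list of Pauli vectors. -/
def listSpan {n : ℕ} (L : List (PauliVec n)) : Submodule (ZMod 2) (PauliVec n) :=
  span (ZMod 2) {v | v ∈ L}

/-- every element `u ∈ span(C) ∩ span(V)` yields an unmasked
stabilizer.  Concretely, if a subcollection of `C` has sum of evolved parts
`u` lying in `span(V)`, then the sum `s_u` of the associated stabilizers lies in
the span of the performed measurements: both `u` and `u + s_u` have outcomes
determined by the measurement record, hence so does `O(s_u) = O(u)·O(u·s_u)`. -/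
lemma pv_add_self {n : ℕ} (x : PauliVec n) : x + x = 0 := by
  have : x + x = (2 : ZMod 2) • x := by rw [two_smul]
  simpa [show (2 : ZMod 2) = 0 from rfl] using this

lemma listSpan_mono {n : ℕ} {L L' : List (PauliVec n)} (h : ∀ x ∈ L, x ∈ L') :
    listSpan L ≤ listSpan L' :=
  Submodule.span_mono (fun x hx => h x hx)

lemma mem_listSpan {n : ℕ} {L : List (PauliVec n)} {x : PauliVec n} (h : x ∈ L) :
    x ∈ listSpan L := Submodule.subset_span h

lemma list_sum_mem' {n : ℕ} {S : Submodule (ZMod 2) (PauliVec n)}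
    {l : List (PauliVec n)} (h : ∀ x ∈ l, x ∈ S) : l.sum ∈ S := by
  induction l with
  | nil => simpa using S.zero_mem
  | cons a t ih =>
      simp only [List.sum_cons]
      exact S.add_mem (h a (by simp)) (ih fun x hx => h x (by simp [hx]))

/-- The key invariant of the distance algorithm. -/
def DAInv {n : ℕ} (σ : AlgState n) : Prop :=
  (∀ cs ∈ σ.C, cs.1 + cs.2 ∈ listSpan σ.meas) ∧
  (∀ v ∈ σ.V, v ∈ listSpan σ.meas)

lemma step_inv {n : ℕ} {σ σ' : AlgState n} {m : PauliVec n}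
    (hst : Step σ m σ') (hinv : DAInv σ) : DAInv σ' := by
  obtain ⟨hC, hV⟩ := hinv
  have hmono : listSpan σ.meas ≤ listSpan (σ.meas ++ [m]) :=
    listSpan_mono (by intro x hx; simp [hx])
  have hm : m ∈ listSpan (σ.meas ++ [m]) := mem_listSpan (by simp)
  cases hst with
  | case1 hC' hV' =>
      refine ⟨fun cs hcs => hmono (hC cs hcs), fun v hv => ?_⟩
      rcases List.mem_append.1 hv with hv | hv
      · exact hmono (hV v hv)
      · simp at hv; subst hv; exact hm
  | case2 cj hcj hanti hV' =>
      constructor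
      · intro cs hcs
        simp only [List.mem_map] at hcs
        obtain ⟨a, ha, rfl⟩ := hcs
        have haC : a ∈ σ.C := (List.erase_sublist).subset ha
        by_cases h : sympl a.1 m = 1
        · simp only [h, if_pos]
          have : (a.1 + cj.1) + (a.2 + cj.2) = (a.1 + a.2) + (cj.1 + cj.2) := by
            abel
          rw [this]
          exact (listSpan (σ.meas ++ [m])).add_mem
            (hmono (hC a haC)) (hmono (hC cj hcj))
        · simp only [h, if_neg (by simpa using h)]
          exact hmono (hC a haC)
      · intro v hv
        rcases List.mem_append.1 hv with hv | hv
        · exact hmono (hV v hv)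
        · simp at hv; subst hv; exact hm
  | case3 mj hmj hanti hC' =>
      refine ⟨fun cs hcs => hmono (hC cs hcs), fun v hv => ?_⟩
      rcases List.mem_append.1 hv with hv | hv
      · simp only [List.mem_map] at hv
        obtain ⟨a, ha, rfl⟩ := hv
        have haV : a ∈ σ.V := (List.erase_sublist).subset ha
        by_cases h : sympl a m = 1
        · simp only [h, if_pos]
          exact (listSpan (σ.meas ++ [m])).add_mem
            (hmono (hV a haV)) (hmono (hV mj hmj))
        · simp only [if_neg (by simpa using h)]
          exact hmono (hV a haV)
      · simp at hv; subst hv; exact hm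
  | case4 mj hmj hanti cj hcj hcanti =>
      constructor
      · intro cs hcs
        simp only [List.mem_map] at hcs
        obtain ⟨a, ha, rfl⟩ := hcs
        by_cases h : sympl a.1 m = 1
        · simp only [h, if_pos]
          have : (a.1 + mj) + a.2 = (a.1 + a.2) + mj := by abel
          rw [this]
          exact (listSpan (σ.meas ++ [m])).add_mem
            (hmono (hC a ha)) (hmono (hV mj hmj))
        · simp only [if_neg (by simpa using h)]
          exact hmono (hC a ha)
      · intro v hv
        rcases List.mem_append.1 hv with hv | hv
        · simp only [List.mem_map] at hv
          obtain ⟨a, ha, rfl⟩ := hv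
          have haV : a ∈ σ.V := (List.erase_sublist).subset ha
          by_cases h : sympl a m = 1
          · simp only [h, if_pos]
            exact (listSpan (σ.meas ++ [m])).add_mem
              (hmono (hV a haV)) (hmono (hV mj hmj))
          · simp only [if_neg (by simpa using h)]
            exact hmono (hV a haV)
        · simp at hv; subst hv; exact hm

lemma run_inv {n : ℕ} {σ σ' : AlgState n} {ms : List (PauliVec n)}
    (hrun : RunList σ ms σ') (hinv : DAInv σ) : DAInv σ' := by
  induction hrun with
  | nil _ => exact hinv
  | cons hst _ ih => exact ih (step_inv hst hinv)

lemma sum_snd_eq {n : ℕ} (sub : List (PauliVec n × PauliVec n)) :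
    (sub.map Prod.snd).sum =
      (sub.map Prod.fst).sum + (sub.map fun cs => cs.1 + cs.2).sum := by
  induction sub with
  | nil => simp
  | cons a t ih =>
      simp only [List.map_cons, List.sum_cons]
      calc a.2 + (t.map Prod.snd).sum
          = (a.1 + a.1) + a.2 +
            ((t.map Prod.fst).sum + (t.map fun cs => cs.1 + cs.2).sum) := by
            rw [pv_add_self, ih]; abel
        _ = a.1 + (t.map Prod.fst).sum +
            ((a.1 + a.2) + (t.map fun cs => cs.1 + cs.2).sum) := by abel

theorem unmasked_syndrome_known {n : ℕ} (S₀ : List (PauliVec n))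
    (hiso : ∀ x ∈ listSpan S₀, ∀ y ∈ listSpan S₀, sympl x y = 0)
    (ms : List (PauliVec n)) (σ : AlgState n)
    (hrun : RunList (initState S₀) ms σ)
    (sub : List (PauliVec n × PauliVec n)) (hsub : sub.Sublist σ.C)
    (hu : (sub.map Prod.fst).sum ∈ listSpan σ.V) :
    (sub.map Prod.snd).sum ∈ listSpan σ.meas := by
  have hinv0 : DAInv (initState S₀) := by
    constructor
    · intro cs hcs
      simp only [initState, List.mem_map] at hcs
      obtain ⟨s, _, rfl⟩ := hcs
      simpa [pv_add_self] using (listSpan ([] : List (PauliVec n))).zero_mem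
    · intro v hv; simp [initState] at hv
  obtain ⟨hC, hV⟩ := run_inv hrun hinv0
  have hVle : listSpan σ.V ≤ listSpan σ.meas := by
    rw [listSpan, Submodule.span_le]
    intro v hv; exact hV v hv
  have h1 : (sub.map Prod.fst).sum ∈ listSpan σ.meas := hVle hu
  have h2 : (sub.map fun cs => cs.1 + cs.2).sum ∈ listSpan σ.meas := by
    refine list_sum_mem' ?_
    intro x hx
    simp only [List.mem_map] at hx
    obtain ⟨cs, hcs, rfl⟩ := hx
    exact hC cs (hsub.subset hcs)
  have key := sum_snd_eq sub
  rw [key]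
  exact (listSpan σ.meas).add_mem h1 h2
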